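/- For all integers n ≥ 1, k ≥ 1, and all integers j with 0 ≤ j < k/√n, |D_{n,k}(j)| ≤ (j!/(1 − j·√n/k)^{j+1})·(√n/k)^j. -/

import Mathlib

open Finset

/-- `D_{n,k}(j) = Σ_{l=0}^{j} C(j,l)·(−1)^{j−l}·(e^{l/k}(1 − l/k))ⁿ`. -/
noncomputable def Dnk (n k j : ℕ) : ℝ :=
  ∑ l ∈ Finset.range (j + 1),
    (j.choose l : ℝ) * (-1) ^ (j - l) * (Real.exp ((l : ℝ) / k) * (1 - (l : ℝ) / k)) ^ n

namespace DnkAux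

noncomputable def A (j m : ℕ) : ℝ :=
  ∑ l ∈ range (j+1), (-1)^l * (j.choose l : ℝ) * (l:ℝ)^m

noncomputable def T (j m : ℕ) : ℝ := (-1)^j * A j m

lemma choose_succ_mul (j l : ℕ) :
    ((l:ℝ)+1) * ((j+1).choose (l+1) : ℝ) = ((j:ℝ)+1) * (j.choose l : ℝ) := by
  have h2 : ((j+1) * j.choose l : ℕ) = ((j+1).choose (l+1) * (l+1) : ℕ) :=
    Nat.add_one_mul_choose_eq j l
  have := congrArg (fun x : ℕ => (x:ℝ)) h2
  push_cast at this
  linarith [this]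

lemma A_rec (j m : ℕ) : A (j+1) (m+1) = ((j:ℝ)+1) * (A (j+1) m - A j m) := by
  have h1 : A (j+1) (m+1)
      = ∑ l ∈ range (j+1), (-1)^(l+1) * ((j+1).choose (l+1) : ℝ) * ((l:ℝ)+1)^(m+1) := by
    rw [A, Finset.sum_range_succ']
    push_cast
    simp
  have h2 : A (j+1) m
      = (∑ l ∈ range (j+1), (-1)^(l+1) * ((j+1).choose (l+1) : ℝ) * ((l:ℝ)+1)^m)
        + (0:ℝ)^m := by
    rw [A, Finset.sum_range_succ']
    push_cast
    simp
  have h3 : A j m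
      = (∑ l ∈ range (j+1), (-1)^(l+1) * (j.choose (l+1) : ℝ) * ((l:ℝ)+1)^m)
        + (0:ℝ)^m := by
    have hext : ∑ l ∈ range (j+2), (-1)^l * (j.choose l : ℝ) * (l:ℝ)^m = A j m := by
      rw [Finset.sum_range_succ, A]
      simp [Nat.choose_eq_zero_of_lt (by omega : j < j+1)]
    rw [← hext, Finset.sum_range_succ']
    push_cast
    simp
  rw [h1, h2, h3]
  have hsub : ((∑ l ∈ range (j+1), (-1)^(l+1) * ((j+1).choose (l+1) : ℝ) * ((l:ℝ)+1)^m) + (0:ℝ)^m)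
      - ((∑ l ∈ range (j+1), (-1)^(l+1) * (j.choose (l+1) : ℝ) * ((l:ℝ)+1)^m) + (0:ℝ)^m)
      = ∑ l ∈ range (j+1), ((-1)^(l+1) * ((j+1).choose (l+1) : ℝ) * ((l:ℝ)+1)^m
          - (-1)^(l+1) * (j.choose (l+1) : ℝ) * ((l:ℝ)+1)^m) := by
    rw [Finset.sum_sub_distrib]; ring
  rw [hsub, Finset.mul_sum]
  refine Finset.sum_congr rfl ?_
  intro l hl
  have pascal : ((j+1).choose (l+1) : ℝ) = (j.choose l : ℝ) + (j.choose (l+1) : ℝ) := by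
    exact_mod_cast congrArg (fun x : ℕ => (x:ℝ)) (Nat.choose_succ_succ j l)
  have hc := choose_succ_mul j l
  calc (-1)^(l+1) * ((j+1).choose (l+1) : ℝ) * ((l:ℝ)+1)^(m+1)
      = (-1)^(l+1) * (((l:ℝ)+1) * ((j+1).choose (l+1) : ℝ)) * ((l:ℝ)+1)^m := by ring
    _ = (-1)^(l+1) * (((j:ℝ)+1) * (j.choose l : ℝ)) * ((l:ℝ)+1)^m := by rw [hc]
    _ = ((j:ℝ)+1) * ((-1)^(l+1) * ((j+1).choose (l+1) : ℝ) * ((l:ℝ)+1)^m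
          - (-1)^(l+1) * (j.choose (l+1) : ℝ) * ((l:ℝ)+1)^m) := by rw [pascal]; ring

lemma T_rec (j m : ℕ) : T (j+1) (m+1) = ((j:ℝ)+1) * (T (j+1) m + T j m) := by
  simp only [T, A_rec]
  rw [pow_succ]
  ring

lemma T_zero (m : ℕ) : T 0 m = (0:ℝ)^m := by simp [T, A]

lemma T_at_zero (j : ℕ) : T (j+1) 0 = 0 := by
  have h := Int.alternating_sum_range_choose_of_ne (n := j+1) (by omega)
  have e : A (j+1) 0 = ((∑ l ∈ range (j+1+1), ((-1)^l * ((j+1).choose l) : ℤ) : ℤ) : ℝ) := by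
    rw [A]; push_cast; simp
  rw [T, e, h]; simp

lemma T_nonneg (j m : ℕ) : 0 ≤ T j m := by
  induction j generalizing m with
  | zero => rw [T_zero]; positivity
  | succ j ih =>
    induction m with
    | zero => rw [T_at_zero]
    | succ m ihm =>
      rw [T_rec]
      have := ih m
      positivity

lemma T_le (j m : ℕ) : T j m ≤ 2^j * (j:ℝ)^m := by
  have h1 : T j m ≤ |A j m| := by
    rw [T]
    calc (-1:ℝ)^j * A j m ≤ |(-1:ℝ)^j * A j m| := le_abs_self _
      _ = |A j m| := by rw [abs_mul, abs_pow, abs_neg, abs_one, one_pow, one_mul]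
  refine h1.trans ?_
  refine (Finset.abs_sum_le_sum_abs _ _).trans ?_
  have h2 : ∀ l ∈ range (j+1),
      |(-1)^l * (j.choose l : ℝ) * (l:ℝ)^m| ≤ (j.choose l : ℝ) * (j:ℝ)^m := by
    intro l hl
    rw [abs_mul, abs_mul, abs_pow, abs_neg, abs_one, one_pow, one_mul,
      Nat.abs_cast, abs_pow, Nat.abs_cast]
    have hlj : (l:ℝ) ≤ (j:ℝ) := by
      exact_mod_cast Nat.le_of_lt_succ (Finset.mem_range.mp hl)
    exact mul_le_mul_of_nonneg_left (pow_le_pow_left₀ (by positivity) hlj m) (by positivity)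
  refine (Finset.sum_le_sum h2).trans ?_
  rw [← Finset.sum_mul]
  have h3 : ∑ l ∈ range (j+1), (j.choose l : ℝ) = 2^j := by
    exact_mod_cast congrArg (fun x : ℕ => (x:ℝ)) (Nat.sum_range_choose j)
  rw [h3]

lemma T_summable {j : ℕ} {ε : ℝ} (hε : 0 < ε) (h1 : (j:ℝ)*ε < 1) :
    Summable (fun m => T j m * ε^m) := by
  refine Summable.of_nonneg_of_le (fun m => mul_nonneg (T_nonneg j m) (by positivity))
    (fun m => ?_) (Summable.mul_left ((2:ℝ)^j)
      (summable_geometric_of_lt_one (mul_nonneg (Nat.cast_nonneg j) hε.le) h1))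
  calc T j m * ε^m ≤ 2^j * (j:ℝ)^m * ε^m :=
        mul_le_mul_of_nonneg_right (T_le j m) (by positivity)
    _ = 2^j * ((j:ℝ)*ε)^m := by rw [mul_pow]; ring

lemma T_hasSum (j : ℕ) {ε : ℝ} (hε : 0 < ε) (h1 : (j:ℝ)*ε < 1) :
    HasSum (fun m => T j m * ε^m)
      ((j.factorial : ℝ) * ε^j / ∏ i ∈ range j, (1 - ((i:ℝ)+1)*ε)) := by
  induction j with
  | zero =>
    simp only [T_zero, Nat.factorial_zero, pow_zero, range_zero, prod_empty]
    have : (fun m => (0:ℝ)^m * ε^m) = (fun m => if m = 0 then (1:ℝ) else 0) := by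
      funext m
      cases m with
      | zero => simp
      | succ m => simp
    rw [this]
    simpa using hasSum_ite_eq 0 (1:ℝ)
  | succ j ih =>
    have hj1 : (j:ℝ)*ε < 1 := by
      have : (j:ℝ)*ε ≤ ((j:ℝ)+1)*ε := by nlinarith
      push_cast at h1
      linarith
    have IH := ih hj1
    have hPpos : (0:ℝ) < ∏ i ∈ range j, (1 - ((i:ℝ)+1)*ε) := by
      refine Finset.prod_pos (fun i hi => ?_)
      have : ((i:ℝ)+1)*ε ≤ ((j:ℝ))*ε := by
        have : ((i:ℝ)+1) ≤ (j:ℝ) := by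
          exact_mod_cast Nat.succ_le_of_lt (Finset.mem_range.mp hi)
        nlinarith
      linarith
    have hfac : (0:ℝ) < 1 - ((j:ℝ)+1)*ε := by push_cast at h1; linarith
    have hsum : Summable (fun m => T (j+1) m * ε^m) := T_summable hε h1
    set P := ∏ i ∈ range j, (1 - ((i:ℝ)+1)*ε) with hP
    set S := ∑' m, T (j+1) m * ε^m with hS
    set Sj := (j.factorial : ℝ) * ε^j / P with hSj
    have key : S = ((j:ℝ)+1)*ε * S + ((j:ℝ)+1)*ε * Sj := by
      have e1 : (fun m => T (j+1) (m+1) * ε^(m+1))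
          = (fun m => ((j:ℝ)+1)*ε * (T (j+1) m * ε^m) + ((j:ℝ)+1)*ε * (T j m * ε^m)) := by
        funext m
        rw [T_rec, pow_succ]
        ring
      calc S = T (j+1) 0 * ε^0 + ∑' m, T (j+1) (m+1) * ε^(m+1) := hsum.tsum_eq_zero_add
        _ = ∑' m, (((j:ℝ)+1)*ε * (T (j+1) m * ε^m) + ((j:ℝ)+1)*ε * (T j m * ε^m)) := by
            rw [T_at_zero]
            simp only [e1, zero_mul, zero_add]
        _ = ((j:ℝ)+1)*ε * S + ((j:ℝ)+1)*ε * Sj := by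
            rw [Summable.tsum_add (hsum.mul_left _) ((T_summable hε hj1).mul_left _),
              tsum_mul_left, tsum_mul_left, IH.tsum_eq]
    have hfj : ((j+1).factorial : ℝ) = ((j:ℝ)+1) * (j.factorial : ℝ) := by
      push_cast [Nat.factorial_succ]; ring
    have h2 : S * (1 - ((j:ℝ)+1)*ε) = ((j:ℝ)+1)*ε * Sj := by linear_combination key
    have hval : S = ((j+1).factorial : ℝ) * ε^(j+1) / ∏ i ∈ range (j+1), (1 - ((i:ℝ)+1)*ε) := by
      rw [Finset.prod_range_succ, ← hP]
      have hne : P * (1 - ((j:ℝ)+1)*ε) ≠ 0 := by positivity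
      rw [eq_div_iff hne]
      calc S * (P * (1 - ((j:ℝ)+1)*ε)) = (S * (1 - ((j:ℝ)+1)*ε)) * P := by ring
        _ = (((j:ℝ)+1)*ε * ((j.factorial : ℝ) * ε^j / P)) * P := by rw [h2, hSj]
        _ = ((j+1).factorial : ℝ) * ε^(j+1) := by
            rw [hfj]
            field_simp
            ring
    rw [← hval]
    exact hsum.hasSum

noncomputable def bb (n c m : ℕ) : ℝ :=
  ∑ i ∈ range (m+1), (-1)^i * (c.choose i : ℝ) * (n:ℝ)^(m-i) / ((m-i).factorial : ℝ)

lemma bb_zero (n c : ℕ) : bb n c 0 = 1 := by simp [bb]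

lemma bb_one (n : ℕ) : bb n n 1 = 0 := by
  simp [bb, Finset.sum_range_succ]

lemma bb_pascal (n N p : ℕ) : bb n (N+1) (p+1) = bb n N (p+1) - bb n N p := by
  rw [bb, bb, bb]
  rw [Finset.sum_range_succ' (fun i => (-1)^i * ((N+1).choose i : ℝ) * (n:ℝ)^(p+1-i) / ((p+1-i).factorial : ℝ)) (p+1),
      Finset.sum_range_succ' (fun i => (-1)^i * (N.choose i : ℝ) * (n:ℝ)^(p+1-i) / ((p+1-i).factorial : ℝ)) (p+1)]
  simp only [Nat.choose_zero_right]
  have e : ∀ i ∈ range (p+1),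
      (-1)^(i+1) * ((N+1).choose (i+1) : ℝ) * (n:ℝ)^(p+1-(i+1)) / ((p+1-(i+1)).factorial : ℝ)
      = ((-1)^(i+1) * (N.choose (i+1) : ℝ) * (n:ℝ)^(p+1-(i+1)) / ((p+1-(i+1)).factorial : ℝ))
        - ((-1)^i * (N.choose i : ℝ) * (n:ℝ)^(p-i) / ((p-i).factorial : ℝ)) := by
    intro i hi
    have hpi : p+1-(i+1) = p-i := by omega
    have pascal : ((N+1).choose (i+1) : ℝ) = (N.choose i : ℝ) + (N.choose (i+1) : ℝ) := by
      exact_mod_cast congrArg (fun x : ℕ => (x:ℝ)) (Nat.choose_succ_succ N i)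
    rw [hpi, pascal, pow_succ]
    ring
  rw [Finset.sum_congr rfl e, Finset.sum_sub_distrib]
  ring

lemma bb_deriv (N p : ℕ) :
    ((p:ℝ)+1) * bb (N+1) (N+1) (p+1)
      = ((N:ℝ)+1) * bb (N+1) (N+1) p - ((N:ℝ)+1) * bb (N+1) N p := by
  have hu : ∑ i ∈ range (p+2),
      (-1)^i * ((N+1).choose i : ℝ) * ((N+1:ℕ):ℝ)^(p+1-i) * ((p+1-i : ℕ):ℝ) / ((p+1-i).factorial : ℝ)
      = ((N:ℝ)+1) * bb (N+1) (N+1) p := by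
    rw [Finset.sum_range_succ]
    have htop : ((p+1-(p+1) : ℕ):ℝ) = 0 := by norm_num
    rw [htop]
    rw [bb, Finset.mul_sum]
    rw [mul_zero, zero_div, add_zero]
    refine Finset.sum_congr rfl ?_
    intro i hi
    have hip : i ≤ p := by
      have := Finset.mem_range.mp hi; omega
    have h1 : p+1-i = (p-i)+1 := by omega
    rw [h1]
    have h2 : (((p-i)+1).factorial : ℝ) = ((((p-i):ℕ):ℝ) + 1) * ((p-i).factorial : ℝ) := by
      push_cast [Nat.factorial_succ]; ring
    have h3 : ((N+1:ℕ):ℝ)^((p-i)+1) = ((N+1:ℕ):ℝ)^(p-i) * ((N:ℝ)+1) := by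
      rw [pow_succ]; push_cast; ring
    have h4 : (((p-i)+1 : ℕ):ℝ) = ((p-i:ℕ):ℝ) + 1 := by push_cast; ring
    rw [h2, h3, h4]
    have h5 : ((p-i:ℕ):ℝ) + 1 ≠ 0 := by positivity
    have h6 : ((p-i).factorial : ℝ) ≠ 0 := by positivity
    generalize hq : ((p-i:ℕ):ℝ) = q at h5 ⊢
    generalize hF : ((p-i).factorial : ℝ) = F at h6 ⊢
    field_simp
  have hv : ∑ i ∈ range (p+2),
      (-1)^i * ((N+1).choose i : ℝ) * ((N+1:ℕ):ℝ)^(p+1-i) * (i:ℝ) / ((p+1-i).factorial : ℝ)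
      = -(((N:ℝ)+1) * bb (N+1) N p) := by
    rw [Finset.sum_range_succ'
      (fun i => (-1)^i * ((N+1).choose i : ℝ) * ((N+1:ℕ):ℝ)^(p+1-i) * (i:ℝ) / ((p+1-i).factorial : ℝ)) (p+1)]
    have h0 : (-1:ℝ)^0 * ((N+1).choose 0 : ℝ) * ((N+1:ℕ):ℝ)^(p+1-0) * ((0:ℕ):ℝ) / ((p+1-0).factorial : ℝ) = 0 := by
      norm_num
    rw [h0, add_zero, bb, Finset.mul_sum, ← Finset.sum_neg_distrib]
    refine Finset.sum_congr rfl ?_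
    intro i hi
    have h1 : p+1-(i+1) = p-i := by omega
    have hc : ((i:ℝ)+1) * ((N+1).choose (i+1) : ℝ) = ((N:ℝ)+1) * (N.choose i : ℝ) :=
      choose_succ_mul N i
    rw [h1, pow_succ]
    have h6 : ((p-i).factorial : ℝ) ≠ 0 := by positivity
    have expand : (-1:ℝ)^i * (-1) * ((N+1).choose (i+1) : ℝ) * ((N+1:ℕ):ℝ)^(p-i) * (((i:ℕ):ℝ)+1) / ((p-i).factorial : ℝ)
        = (-1:ℝ)^i * (-1) * ((((i:ℝ)+1) * ((N+1).choose (i+1) : ℝ))) * ((N+1:ℕ):ℝ)^(p-i) / ((p-i).factorial : ℝ) := by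
      ring
    push_cast at expand ⊢
    rw [expand, hc]
    ring
  rw [bb, Finset.mul_sum]
  have split : ∀ i ∈ range (p+2),
      ((p:ℝ)+1) * ((-1)^i * ((N+1).choose i : ℝ) * ((N+1:ℕ):ℝ)^(p+1-i) / ((p+1-i).factorial : ℝ))
      = (-1)^i * ((N+1).choose i : ℝ) * ((N+1:ℕ):ℝ)^(p+1-i) * ((p+1-i : ℕ):ℝ) / ((p+1-i).factorial : ℝ)
        + (-1)^i * ((N+1).choose i : ℝ) * ((N+1:ℕ):ℝ)^(p+1-i) * (i:ℝ) / ((p+1-i).factorial : ℝ) := by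
    intro i hi
    have hip : i ≤ p+1 := by have := Finset.mem_range.mp hi; omega
    have hcast : ((p+1-i : ℕ):ℝ) + (i:ℝ) = (p:ℝ)+1 := by
      have : (p+1-i) + i = p+1 := by omega
      exact_mod_cast congrArg (fun x : ℕ => (x:ℝ)) this
    rw [← add_div]
    rw [← hcast]
    ring
  rw [Finset.sum_congr rfl split, Finset.sum_add_distrib, hu, hv]
  ring

lemma bb_rec (N p : ℕ) : ((p:ℝ)+2) * bb (N+1) (N+1) (p+2)
    = ((p:ℝ)+1) * bb (N+1) (N+1) (p+1) - ((N:ℝ)+1) * bb (N+1) (N+1) p := by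
  have d1 := bb_deriv N (p+1)
  have d0 := bb_deriv N p
  have pas := bb_pascal (N+1) N p
  push_cast at d1
  rw [show p+1+1 = p+2 from rfl] at d1
  linear_combination d1 - d0 + ((N:ℝ)+1) * pas

lemma bb_abs (N : ℕ) : ∀ m, |bb (N+1) (N+1) m| ≤ Real.sqrt (N+1) ^ m := by
  set s := Real.sqrt (N+1) with hs
  have hs1 : 1 ≤ s := by
    rw [hs, Real.one_le_sqrt]
    linarith [Nat.cast_nonneg (α := ℝ) N]
  have hs2 : s^2 = (N:ℝ)+1 := by
    rw [hs, Real.sq_sqrt (by positivity)]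
  have H : ∀ m, |bb (N+1) (N+1) m| ≤ s^m ∧ |bb (N+1) (N+1) (m+1)| ≤ s^(m+1) := by
    intro m
    induction m with
    | zero =>
      constructor
      · rw [bb_zero]; simp
      · rw [bb_one, abs_zero]; positivity
    | succ m ih =>
      refine ⟨ih.2, ?_⟩
      have h := bb_rec N m
      have hm2 : (0:ℝ) < (m:ℝ)+2 := by positivity
      have habs : ((m:ℝ)+2) * |bb (N+1) (N+1) (m+2)| ≤ ((m:ℝ)+2) * s^(m+2) := by
        have hsm : (0:ℝ) ≤ s^m := by positivity
        calc ((m:ℝ)+2) * |bb (N+1) (N+1) (m+2)|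
            = |((m:ℝ)+2) * bb (N+1) (N+1) (m+2)| := by
              rw [abs_mul, abs_of_pos hm2]
          _ = |((m:ℝ)+1) * bb (N+1) (N+1) (m+1) - ((N:ℝ)+1) * bb (N+1) (N+1) m| := by rw [h]
          _ ≤ ((m:ℝ)+1) * |bb (N+1) (N+1) (m+1)| + ((N:ℝ)+1) * |bb (N+1) (N+1) m| := by
              refine (abs_sub _ _).trans ?_
              rw [abs_mul, abs_mul, abs_of_pos (by positivity : (0:ℝ) < (m:ℝ)+1),
                abs_of_pos (by positivity : (0:ℝ) < (N:ℝ)+1)]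
          _ ≤ ((m:ℝ)+1) * s^(m+1) + ((N:ℝ)+1) * s^m := by
              gcongr
              · exact ih.2
              · exact ih.1
          _ ≤ ((m:ℝ)+2) * s^(m+2) := by
              have e1 : s^(m+1) = s^m * s := pow_succ s m
              have e2 : s^(m+2) = s^m * s * s := by rw [pow_succ, pow_succ]
              have h0 : (0:ℝ) ≤ s := by linarith
              have hXs : (0:ℝ) ≤ s^m * s := mul_nonneg hsm h0
              have hNs : ((N:ℝ)+1) = s*s := by rw [← hs2]; ring
              have h1 : s^m * s ≤ s^m * s * s := by nlinarith
              rw [e1, e2, hNs]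
              nlinarith [h1, hXs, hsm, Nat.cast_nonneg (α := ℝ) m]
      exact le_of_mul_le_mul_left habs hm2
  exact fun m => (H m).1

lemma bb_hasSum (n : ℕ) (y : ℝ) :
    HasSum (fun m => bb n n m * y^m) (Real.exp ((n:ℝ)*y) * (1-y)^n) := by
  set g : ℕ → ℕ → ℝ := fun i m =>
    if i ≤ m then (-1)^i * (n.choose i : ℝ) * (n:ℝ)^(m-i) / ((m-i).factorial : ℝ) * y^m else 0
    with hg
  have hgsum : ∀ i, HasSum (g i)
      ((-1)^i * (n.choose i : ℝ) * y^i * Real.exp ((n:ℝ)*y)) := by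
    intro i
    have hexp : HasSum (fun m => ((n:ℝ)*y)^m / (m.factorial : ℝ)) (Real.exp ((n:ℝ)*y)) := by
      rw [Real.exp_eq_exp_ℝ]
      exact NormedSpace.expSeries_div_hasSum_exp ((n:ℝ)*y)
    have hmul := hexp.mul_left ((-1)^i * (n.choose i : ℝ) * y^i)
    have hinj : Function.Injective (fun m : ℕ => m + i) := add_left_injective i
    have hzero : ∀ x ∉ Set.range (fun m : ℕ => m + i), g i x = 0 := by
      intro x hx
      have : ¬ i ≤ x := by
        intro h
        exact hx ⟨x - i, show (x - i) + i = x by omega⟩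
      simp [hg, this]
    rw [← Function.Injective.hasSum_iff hinj hzero]
    refine hmul.congr_fun ?_
    intro m
    have h1 : (m + i) - i = m := by omega
    have h2 : i ≤ m + i := by omega
    simp only [Function.comp, hg, h1, if_pos h2]
    rw [mul_pow, pow_add]
    ring
  have htot := hasSum_sum (f := g) (s := range (n+1))
    (a := fun i => (-1)^i * (n.choose i : ℝ) * y^i * Real.exp ((n:ℝ)*y))
    (fun i _ => hgsum i)
  have hval : ∑ i ∈ range (n+1), (-1)^i * (n.choose i : ℝ) * y^i * Real.exp ((n:ℝ)*y)
      = Real.exp ((n:ℝ)*y) * (1-y)^n := by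
    rw [← Finset.sum_mul]
    have hbin : (1-y)^n = ∑ i ∈ range (n+1), (-1)^i * (n.choose i : ℝ) * y^i := by
      have h := add_pow (-y) 1 n
      simp only [one_pow, mul_one] at h
      rw [show (1:ℝ) - y = -y + 1 from by ring, h]
      refine Finset.sum_congr rfl ?_
      intro i _
      rw [neg_pow]
      ring
    rw [hbin]
    ring
  rw [hval] at htot
  refine htot.congr_fun ?_
  intro m
  have e1 : ∑ i ∈ range (n+1), g i m = ∑ i ∈ range (n+m+1), g i m := by
    refine Finset.sum_subset (by
      intro x hx
      rw [Finset.mem_range] at *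
      omega) ?_
    intro x _ hx
    have hxn : n < x := by
      rw [Finset.mem_range] at hx
      omega
    have : (n.choose x : ℝ) = 0 := by
      exact_mod_cast congrArg (fun t : ℕ => (t:ℝ)) (Nat.choose_eq_zero_of_lt hxn)
    simp [hg, this]
  have e2 : bb n n m * y^m = ∑ i ∈ range (n+m+1), g i m := by
    rw [bb, Finset.sum_mul]
    rw [show (∑ i ∈ range (m+1), (-1)^i * (n.choose i : ℝ) * (n:ℝ)^(m-i) / ((m-i).factorial : ℝ) * y^m)
        = ∑ i ∈ range (m+1), g i m from Finset.sum_congr rfl (by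
      intro i hi
      have : i ≤ m := by
        rw [Finset.mem_range] at hi; omega
      simp [hg, this])]
    refine Finset.sum_subset (by
      intro x hx
      rw [Finset.mem_range] at *
      omega) ?_
    intro x _ hx
    have : ¬ x ≤ m := by
      rw [Finset.mem_range] at hx
      omega
    simp [hg, this]
  rw [e2, e1]

end DnkAux

/-- For `n ≥ 1`, `k ≥ 1` and `0 ≤ j < k/√n`,
`|D_{n,k}(j)| ≤ (j!/(1 − j√n/k)^{j+1})·(√n/k)^j`. -/
theorem Dnk_abs_le_of_lt (n k : ℕ) (hn : 1 ≤ n) (hk : 1 ≤ k) (j : ℕ)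
    (hj : (j : ℝ) < (k : ℝ) / Real.sqrt n) :
    |Dnk n k j| ≤
      (Nat.factorial j : ℝ) / (1 - (j : ℝ) * Real.sqrt n / k) ^ (j + 1) *
        (Real.sqrt n / k) ^ j := by
  classical
  open DnkAux in
  obtain ⟨N, rfl⟩ : ∃ N, n = N + 1 := ⟨n - 1, by omega⟩
  set n := N + 1 with hn'
  set s := Real.sqrt n with hs
  have hk0 : (0:ℝ) < k := by exact_mod_cast hk
  have hs0 : (0:ℝ) < s := by
    rw [hs]
    apply Real.sqrt_pos.mpr
    push_cast; positivity
  set ε := s / k with hε'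
  have hε : 0 < ε := by positivity
  have hjε : (j:ℝ) * ε < 1 := by
    have h1 : (j:ℝ) * s < k := (lt_div_iff₀ hs0).mp hj
    have h2 : (j:ℝ) * ε = ((j:ℝ) * s) / k := by rw [hε']; ring
    rw [h2]
    exact (div_lt_one hk0).mpr h1
  -- the series for Dnk
  have hfl : ∀ l : ℕ, HasSum (fun m => bb n n m * ((l:ℝ)/k)^m)
      ((Real.exp ((l:ℝ)/k) * (1 - (l:ℝ)/k))^n) := by
    intro l
    have h := bb_hasSum n ((l:ℝ)/k)
    rwa [Real.exp_nat_mul, ← mul_pow] at h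
  have hDsum : HasSum (fun m => bb n n m / (k:ℝ)^m * T j m) (Dnk n k j) := by
    have htot := hasSum_sum (f := fun l m => ((j.choose l : ℝ) * (-1)^(j-l)) * (bb n n m * ((l:ℝ)/k)^m))
      (s := range (j+1))
      (a := fun l => ((j.choose l : ℝ) * (-1)^(j-l)) * ((Real.exp ((l:ℝ)/k) * (1 - (l:ℝ)/k))^n))
      (fun l _ => (hfl l).mul_left _)
    have hD : Dnk n k j = ∑ l ∈ range (j+1),
        ((j.choose l : ℝ) * (-1)^(j-l)) * ((Real.exp ((l:ℝ)/k) * (1 - (l:ℝ)/k))^n) := rfl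
    rw [← hD] at htot
    refine htot.congr_fun ?_
    intro m
    have : ∀ l ∈ range (j+1),
        ((j.choose l : ℝ) * (-1)^(j-l)) * (bb n n m * ((l:ℝ)/k)^m)
        = (bb n n m / (k:ℝ)^m) * ((-1:ℝ)^j * ((-1)^l * (j.choose l : ℝ) * (l:ℝ)^m)) := by
      intro l hl
      have hlj : l ≤ j := Nat.le_of_lt_succ (Finset.mem_range.mp hl)
      have hsign : (-1:ℝ)^(j-l) = (-1)^j * (-1)^l := by
        have hj' : (-1:ℝ)^j = (-1)^(j-l) * (-1)^l := by
          rw [← pow_add]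
          congr 1
          omega
        have hsq : (-1:ℝ)^l * (-1:ℝ)^l = 1 := by
          rw [← pow_add, ← two_mul, pow_mul]
          norm_num
        rw [hj', mul_assoc, hsq, mul_one]
      rw [hsign, div_pow]
      ring
    rw [Finset.sum_congr rfl this, ← Finset.mul_sum, ← Finset.mul_sum, ← A, ← T]
  -- bound each coefficient
  have hcast : ((N+1:ℕ):ℝ) = (N:ℝ)+1 := by push_cast; ring
  have hb : ∀ m, |bb n n m| ≤ s^m := by
    intro m
    have h := bb_abs N m
    rw [hs, hn', hcast]
    exact h
  have hbound : ∀ m, |bb n n m / (k:ℝ)^m * T j m| ≤ T j m * ε^m := by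
    intro m
    have hkm : (0:ℝ) < (k:ℝ)^m := pow_pos hk0 m
    rw [abs_mul, abs_div, abs_of_nonneg (T_nonneg j m), abs_of_pos hkm]
    calc |bb n n m| / (k:ℝ)^m * T j m ≤ s^m / (k:ℝ)^m * T j m := by
          gcongr <;> first
            | exact T_nonneg j m
            | exact hb m
      _ = T j m * ε^m := by rw [hε', div_pow]; ring
  have hgeo := T_hasSum j hε hjε
  have habsSummable : Summable (fun m => |bb n n m / (k:ℝ)^m * T j m|) :=
    Summable.of_nonneg_of_le (fun m => abs_nonneg _) hbound hgeo.summable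
  have h1 : |Dnk n k j| ≤ ∑' m, |bb n n m / (k:ℝ)^m * T j m| := by
    rw [← hDsum.tsum_eq]
    have hh := norm_tsum_le_tsum_norm (f := fun m => bb n n m / (k:ℝ)^m * T j m)
        (by simpa only [Real.norm_eq_abs] using habsSummable)
    simpa only [Real.norm_eq_abs] using hh
  have h2 : ∑' m, |bb n n m / (k:ℝ)^m * T j m| ≤ ∑' m, T j m * ε^m :=
    Summable.tsum_le_tsum hbound habsSummable hgeo.summable
  have h3 : ∑' m, T j m * ε^m
      = (j.factorial : ℝ) * ε^j / ∏ i ∈ range j, (1 - ((i:ℝ)+1)*ε) := hgeo.tsum_eq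
  set P := ∏ i ∈ range j, (1 - ((i:ℝ)+1)*ε) with hP
  have hone : (0:ℝ) < 1 - (j:ℝ)*ε := by linarith
  have hPpos : (0:ℝ) < P := by
    rw [hP]
    refine Finset.prod_pos (fun i hi => ?_)
    have hij : ((i:ℝ)+1) ≤ (j:ℝ) := by
      exact_mod_cast Nat.succ_le_of_lt (Finset.mem_range.mp hi)
    nlinarith
  have hP1 : (1-(j:ℝ)*ε)^(j+1) ≤ P := by
    have hstep : (1-(j:ℝ)*ε)^j ≤ P := by
      calc (1-(j:ℝ)*ε)^j = ∏ _i ∈ range j, (1-(j:ℝ)*ε) := by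
            rw [Finset.prod_const, Finset.card_range]
        _ ≤ P := by
            rw [hP]
            refine Finset.prod_le_prod (fun i _ => by linarith) (fun i hi => ?_)
            have hij : ((i:ℝ)+1) ≤ (j:ℝ) := by
              exact_mod_cast Nat.succ_le_of_lt (Finset.mem_range.mp hi)
            nlinarith
    calc (1-(j:ℝ)*ε)^(j+1) = (1-(j:ℝ)*ε)^j * (1-(j:ℝ)*ε) := pow_succ _ _
      _ ≤ P * 1 := by
          refine mul_le_mul hstep (by nlinarith) (by linarith) hPpos.le
      _ = P := mul_one P
  have hfinal : (j.factorial : ℝ) * ε^j / P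
      ≤ (j.factorial : ℝ) / (1-(j:ℝ)*ε)^(j+1) * ε^j := by
    rw [div_mul_eq_mul_div]
    apply div_le_div_of_nonneg_left (by positivity) (by positivity) hP1
  have hRHS : (Nat.factorial j : ℝ) / (1 - (j:ℝ) * s / (k:ℝ))^(j+1) * (s / (k:ℝ))^j
      = (Nat.factorial j : ℝ) / (1-(j:ℝ)*ε)^(j+1) * ε^j := by
    rw [hε', mul_div_assoc]
  rw [hRHS]
  calc |Dnk n k j| ≤ ∑' m, |bb n n m / (k:ℝ)^m * T j m| := h1
    _ ≤ ∑' m, T j m * ε^m := h2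
    _ = (j.factorial : ℝ) * ε^j / P := h3
    _ ≤ (j.factorial : ℝ) / (1-(j:ℝ)*ε)^(j+1) * ε^j := hfinal
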